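/- Let G=(V,E) be a polytree and let (i,j)∈E be an edge. Then every 2×2 minor of the trek-matrix A_{i,j} belongs to the third-order moment ideal I^{≤3}(G). Concretely, under the parametrization of the model, the second row of A_{i,j} equals λ_{ij} times the first row, so A_{i,j} has rank at most one on the model. -/

import Mathlib

open MvPolynomial Matrix Finset

namespace LNG

variable {n : ℕ}

/-- A directed path in the directed graph `E`, recorded as the (nonempty) list of
visited vertices. -/
def IsDiPath (E : Fin n → Fin n → Prop) : List (Fin n) → Prop
  | [] => False
  | [_] => True
  | a :: b :: l => E a b ∧ IsDiPath E (b :: l)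

/-- `p` is a directed path from `v` to `i` (possibly of length zero). -/
def IsPathFromTo (E : Fin n → Fin n → Prop) (v : Fin n) (p : List (Fin n)) (i : Fin n) : Prop :=
  IsDiPath E p ∧ p.head? = some v ∧ p.getLast? = some i

/-- A `k`-trek with top `v` between the vertices `i 0, …, i (k-1)`: an ordered collection
of directed paths with common source `v`, where the `r`-th path has sink `i r`. -/
def IsTrek (E : Fin n → Fin n → Prop) {k : ℕ} (v : Fin n)
    (P : Fin k → List (Fin n)) (i : Fin k → Fin n) : Prop :=
  ∀ r, IsPathFromTo E v (P r) (i r)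

/-- A simple `k`-trek: the top is the only vertex lying on all `k` paths. -/
def IsSimpleTrek (E : Fin n → Fin n → Prop) {k : ℕ} (v : Fin n)
    (P : Fin k → List (Fin n)) (i : Fin k → Fin n) : Prop :=
  IsTrek E v P i ∧ ∀ w : Fin n, (∀ r, w ∈ P r) → w = v

/-- A 2-trek with top `v` between `i` and `j`. -/
def IsTrek2 (E : Fin n → Fin n → Prop) (v : Fin n) (p q : List (Fin n)) (i j : Fin n) : Prop :=
  IsPathFromTo E v p i ∧ IsPathFromTo E v q j

def IsSimpleTrek2 (E : Fin n → Fin n → Prop) (v : Fin n) (p q : List (Fin n))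
    (i j : Fin n) : Prop :=
  IsTrek2 E v p q i j ∧ ∀ w : Fin n, w ∈ p → w ∈ q → w = v

/-- A 3-trek with top `v` between `i`, `j` and `k`. -/
def IsTrek3 (E : Fin n → Fin n → Prop) (v : Fin n) (p q r : List (Fin n))
    (i j k : Fin n) : Prop :=
  IsPathFromTo E v p i ∧ IsPathFromTo E v q j ∧ IsPathFromTo E v r k

def IsSimpleTrek3 (E : Fin n → Fin n → Prop) (v : Fin n) (p q r : List (Fin n))
    (i j k : Fin n) : Prop :=
  IsTrek3 E v p q r i j k ∧ ∀ w : Fin n, w ∈ p → w ∈ q → w ∈ r → w = v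

def Trek2Exists (E : Fin n → Fin n → Prop) (i j : Fin n) : Prop :=
  ∃ v p q, IsTrek2 E v p q i j

def Trek3Exists (E : Fin n → Fin n → Prop) (i j k : Fin n) : Prop :=
  ∃ v p q r, IsTrek3 E v p q r i j k

/-- The underlying undirected (simple) graph of the directed graph `E`. -/
def underlying (E : Fin n → Fin n → Prop) : SimpleGraph (Fin n) where
  Adj a b := a ≠ b ∧ (E a b ∨ E b a)
  symm := ⟨fun a b h => ⟨h.1.symm, h.2.symm⟩⟩
  loopless := ⟨fun a h => h.1 rfl⟩

/-- A polytree: a topologically ordered DAG whose underlying undirected graph is a tree. -/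
def IsPolytree (E : Fin n → Fin n → Prop) : Prop :=
  (∀ i j : Fin n, E i j → i < j) ∧ (underlying E).IsTree

/-! ### Variables of the moment polynomial ring -/

abbrev SIdx (n : ℕ) := {p : Fin n × Fin n // p.1 ≤ p.2}
abbrev TIdx (n : ℕ) := {p : Fin n × Fin n × Fin n // p.1 ≤ p.2.1 ∧ p.2.1 ≤ p.2.2}

/-- Variables `s_{ij}` (`1 ≤ i ≤ j ≤ n`) and `t_{ijk}` (`1 ≤ i ≤ j ≤ k ≤ n`). -/
abbrev MomVar (n : ℕ) := SIdx n ⊕ TIdx n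

/-- Parameter variables `a_i`, `b_i` (`i ∈ V`) and `λ_{ij}`. -/
abbrev PVar (n : ℕ) := (Fin n ⊕ Fin n) ⊕ Fin n × Fin n

/-- Median of three. -/
def mid3 (i j k : Fin n) : Fin n := max (min i j) (min (max i j) k)

lemma min3_le_mid3 (i j k : Fin n) : min i (min j k) ≤ mid3 i j k :=
  le_trans (le_min (min_le_left _ _) (le_trans (min_le_right i (min j k)) (min_le_left j k)))
    (le_max_left _ _)

lemma mid3_le_max3 (i j k : Fin n) : mid3 i j k ≤ max i (max j k) :=
  max_le (le_trans (min_le_left i j) (le_max_left _ _))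
    (le_trans (min_le_right (max i j) k) (le_trans (le_max_right j k) (le_max_right i _)))

/-- The variable `s_{ij}` (indices sorted). -/
noncomputable def svar (i j : Fin n) : MvPolynomial (MomVar n) ℝ :=
  X (Sum.inl ⟨(min i j, max i j), min_le_max⟩)

/-- The variable `t_{ijk}` (indices sorted). -/
noncomputable def tvar (i j k : Fin n) : MvPolynomial (MomVar n) ℝ :=
  X (Sum.inr ⟨(min i (min j k), mid3 i j k, max i (max j k)),
      min3_le_mid3 i j k, mid3_le_max3 i j k⟩)

/-- Evaluation of the moment variables at a concrete pair `(S, T)`. -/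
def evalVar (S : Matrix (Fin n) (Fin n) ℝ) (T : Fin n → Fin n → Fin n → ℝ) :
    MomVar n → ℝ
  | Sum.inl p => S p.1.1 p.1.2
  | Sum.inr p => T p.1.1 p.1.2.1 p.1.2.2

/-! ### The third-order moment model -/

/-- `Λ ∈ ℝ^E`. -/
def Supported (E : Fin n → Fin n → Prop) (Λ : Matrix (Fin n) (Fin n) ℝ) : Prop :=
  ∀ i j, ¬ E i j → Λ i j = 0

/-- Covariance matrix `(I-Λ)^{-T} Ω⁽²⁾ (I-Λ)^{-1}`. -/
noncomputable def momentS (Λ : Matrix (Fin n) (Fin n) ℝ) (ω2 : Fin n → ℝ) :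
    Matrix (Fin n) (Fin n) ℝ :=
  ((1 - Λ)⁻¹)ᵀ * Matrix.diagonal ω2 * (1 - Λ)⁻¹

/-- Third moment tensor `Ω⁽³⁾ ∙ (I-Λ)^{-1} ∙ (I-Λ)^{-1} ∙ (I-Λ)^{-1}`. -/
noncomputable def momentT (Λ : Matrix (Fin n) (Fin n) ℝ) (ω3 : Fin n → ℝ)
    (i j k : Fin n) : ℝ :=
  ∑ a, ω3 a * (1 - Λ)⁻¹ a i * (1 - Λ)⁻¹ a j * (1 - Λ)⁻¹ a k

/-- Membership in the third-order moment model `M^{≤3}(G)`. -/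
def MomentModel (E : Fin n → Fin n → Prop)
    (S : Matrix (Fin n) (Fin n) ℝ) (T : Fin n → Fin n → Fin n → ℝ) : Prop :=
  ∃ (Λ : Matrix (Fin n) (Fin n) ℝ) (ω2 ω3 : Fin n → ℝ),
    Supported E Λ ∧ (∀ i, 0 < ω2 i) ∧ S = momentS Λ ω2 ∧ T = momentT Λ ω3

/-- The third-order moment (vanishing) ideal `I^{≤3}(G)`. -/
noncomputable def momentIdeal (E : Fin n → Fin n → Prop) : Ideal (MvPolynomial (MomVar n) ℝ) where
  carrier := {f | ∀ S T, MomentModel E S T → eval (evalVar S T) f = 0}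
  add_mem' := by
    intro f g hf hg S T h
    simp [map_add, hf S T h, hg S T h]
  zero_mem' := by
    intro S T h
    simp
  smul_mem' := by
    intro c f hf S T h
    simp [smul_eq_mul, _root_.map_mul, hf S T h]

/-- A fully symmetric 3-tensor. -/
def SymTensor3 (T : Fin n → Fin n → Fin n → ℝ) : Prop :=
  ∀ i j k : Fin n, T i j k = T j i k ∧ T i j k = T i k j

/-! ### Trek matrices and their minors -/

/-- `top(i,k) = top(j,k)`: there is a common vertex `v` that is the top of the
simple 2-treks between `i,k` and between `j,k`. -/
def SameTop2 (E : Fin n → Fin n → Prop) (i j k : Fin n) : Prop :=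
  ∃ v, (∃ p q, IsSimpleTrek2 E v p q i k) ∧ (∃ p q, IsSimpleTrek2 E v p q j k)

/-- `top(i,l,m) = top(j,l,m)`. -/
def SameTop3 (E : Fin n → Fin n → Prop) (i j l m : Fin n) : Prop :=
  ∃ v, (∃ p q r, IsSimpleTrek3 E v p q r i l m) ∧ (∃ p q r, IsSimpleTrek3 E v p q r j l m)

/-- `f` is a `2 × 2` minor of the trek-matrix `A_{i,j}`. -/
def IsTrekMinorOf (E : Fin n → Fin n → Prop) (i j : Fin n)
    (f : MvPolynomial (MomVar n) ℝ) : Prop :=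
  (∃ k k', SameTop2 E i j k ∧ SameTop2 E i j k' ∧
      f = svar i k * svar j k' - svar j k * svar i k') ∨
  (∃ k l m, SameTop2 E i j k ∧ SameTop3 E i j l m ∧
      f = svar i k * tvar j l m - svar j k * tvar i l m) ∨
  (∃ l m l' m', SameTop3 E i j l m ∧ SameTop3 E i j l' m' ∧
      f = tvar i l m * tvar j l' m' - tvar j l m * tvar i l' m')

/-- Variables `s_{ij}` with no 2-trek between `i,j` and `t_{ijk}` with no 3-trek. -/
def noTrekVars (E : Fin n → Fin n → Prop) : Set (MvPolynomial (MomVar n) ℝ) :=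
  {f | (∃ i j, ¬ Trek2Exists E i j ∧ f = svar i j) ∨
       (∃ i j k, ¬ Trek3Exists E i j k ∧ f = tvar i j k)}

/-- The 2-minors of the trek-matrices `A_{i,j}` over edges `i → j` of `G`. -/
def edgeMinors (E : Fin n → Fin n → Prop) : Set (MvPolynomial (MomVar n) ℝ) :=
  {f | ∃ i j, E i j ∧ IsTrekMinorOf E i j f}

/-- The 2-minors of all trek-matrices `A_{i,j}`. -/
def allMinors (E : Fin n → Fin n → Prop) : Set (MvPolynomial (MomVar n) ℝ) :=
  {f | ∃ i j, Trek2Exists E i j ∧ IsTrekMinorOf E i j f}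

/-! ### The simple trek rule parametrization -/

/-- Product of the edge weights `w` along a path. -/
def pathProd {R : Type*} [CommSemiring R] (w : Fin n → Fin n → R) : List (Fin n) → R
  | [] => 1
  | [_] => 1
  | a :: b :: l => w a b * pathProd w (b :: l)

/-- Sum of a weight over all simple 2-treks between `i` and `j`. -/
noncomputable def trekSum2 {M : Type*} [AddCommMonoid M] (E : Fin n → Fin n → Prop)
    (wt : Fin n → List (Fin n) → List (Fin n) → M) (i j : Fin n) : M :=
  ∑ᶠ τ : {x : Fin n × List (Fin n) × List (Fin n) //
      IsSimpleTrek2 E x.1 x.2.1 x.2.2 i j}, wt τ.1.1 τ.1.2.1 τ.1.2.2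

/-- Sum of a weight over all simple 3-treks between `i`, `j` and `k`. -/
noncomputable def trekSum3 {M : Type*} [AddCommMonoid M] (E : Fin n → Fin n → Prop)
    (wt : Fin n → List (Fin n) → List (Fin n) → List (Fin n) → M) (i j k : Fin n) : M :=
  ∑ᶠ τ : {x : Fin n × List (Fin n) × List (Fin n) × List (Fin n) //
      IsSimpleTrek3 E x.1 x.2.1 x.2.2.1 x.2.2.2 i j k},
    wt τ.1.1 τ.1.2.1 τ.1.2.2.1 τ.1.2.2.2

/-- The `(i,j)` coordinate of the simple trek rule parametrization `φ_G^*` (covariances). -/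
noncomputable def phiS (E : Fin n → Fin n → Prop) (a : Fin n → ℝ)
    (Λ : Matrix (Fin n) (Fin n) ℝ) (i j : Fin n) : ℝ :=
  trekSum2 E (fun v p q => a v * (pathProd (fun x y => Λ x y) p * pathProd (fun x y => Λ x y) q)) i j

/-- The `(i,j,k)` coordinate of the simple trek rule parametrization `φ_G^*` (third moments). -/
noncomputable def phiT (E : Fin n → Fin n → Prop) (b : Fin n → ℝ)
    (Λ : Matrix (Fin n) (Fin n) ℝ) (i j k : Fin n) : ℝ :=
  trekSum3 E (fun v p q r => b v * (pathProd (fun x y => Λ x y) p *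
    pathProd (fun x y => Λ x y) q * pathProd (fun x y => Λ x y) r)) i j k

/-- The ring homomorphism `φ_G` of the simple trek rule. -/
noncomputable def phiG (E : Fin n → Fin n → Prop) :
    MvPolynomial (MomVar n) ℝ →ₐ[ℝ] MvPolynomial (PVar n) ℝ :=
  aeval fun v => match v with
    | Sum.inl p => trekSum2 E (fun v' pl ql =>
        X (Sum.inl (Sum.inl v')) * (pathProd (fun x y => X (Sum.inr (x, y))) pl *
          pathProd (fun x y => X (Sum.inr (x, y))) ql)) p.1.1 p.1.2
    | Sum.inr p => trekSum3 E (fun v' pl ql rl =>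
        X (Sum.inl (Sum.inr v')) * (pathProd (fun x y => X (Sum.inr (x, y))) pl *
          pathProd (fun x y => X (Sum.inr (x, y))) ql *
          pathProd (fun x y => X (Sum.inr (x, y))) rl)) p.1.1 p.1.2.1 p.1.2.2

/-! ### Auxiliary infrastructure -/

section Aux

variable {E : Fin n → Fin n → Prop}

lemma isDiPath_iff (p : List (Fin n)) : IsDiPath E p ↔ p ≠ [] ∧ p.Chain' E := by
  induction p with
  | nil => simp [IsDiPath]
  | cons a t ih =>
    cases t with
    | nil => simp [IsDiPath, List.Chain', List.isChain_singleton]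
    | cons b l =>
      simp only [IsDiPath, ih, List.Chain', List.isChain_cons_cons, ne_eq, reduceCtorEq, not_false_eq_true,
        true_and]

namespace IsPathFromTo

variable {v b : Fin n} {p : List (Fin n)}

lemma ne_nil (hp : IsPathFromTo E v p b) : p ≠ [] := by
  intro h; subst h; exact (isDiPath_iff []).mp hp.1 |>.1 rfl

lemma chain' (hp : IsPathFromTo E v p b) : p.Chain' E := ((isDiPath_iff p).mp hp.1).2

lemma head_mem (hp : IsPathFromTo E v p b) : v ∈ p := List.mem_of_mem_head? hp.2.1

lemma last_mem (hp : IsPathFromTo E v p b) : b ∈ p := List.mem_of_mem_getLast? hp.2.2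

end IsPathFromTo

lemma isPathFromTo_single (a : Fin n) : IsPathFromTo E a [a] a :=
  ⟨trivial, rfl, rfl⟩

variable (hE : ∀ i j : Fin n, E i j → i < j)
include hE

lemma path_sorted {v b p} (hp : IsPathFromTo E v p b) : p.Chain' (· < ·) :=
  hp.chain'.imp (fun a b h => hE a b h)

lemma path_pairwise {v b p} (hp : IsPathFromTo E v p b) : p.Pairwise (· < ·) :=
  List.isChain_iff_pairwise.mp (path_sorted hE hp)

lemma path_nodup {v b p} (hp : IsPathFromTo E v p b) : p.Nodup :=
  (path_pairwise hE hp).imp (fun h => ne_of_lt h)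

lemma path_le_of_mem {v b p x} (hp : IsPathFromTo E v p b) (hx : x ∈ p) : v ≤ x ∧ x ≤ b := by
  have hpw := path_pairwise hE hp
  obtain ⟨t, rfl⟩ : ∃ t, p = v :: t := by
    cases p with
    | nil => exact absurd rfl hp.ne_nil
    | cons c t =>
      have : c = v := by simpa using hp.2.1
      exact ⟨t, by rw [this]⟩
  constructor
  · rcases List.mem_cons.mp hx with rfl | hx
    · exact le_refl _
    · exact le_of_lt ((List.pairwise_cons.mp hpw).1 x hx)
  · -- x ≤ b : use decomposition from the back
    have hne : (v :: t) ≠ [] := by simp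
    have hdecomp := List.dropLast_append_getLast hne
    have hb : (v :: t).getLast hne = b := by
      have := hp.2.2
      rwa [List.getLast?_eq_getLast hne, Option.some_inj] at this
    rw [hb] at hdecomp
    rcases (by rw [← hdecomp] at hx; exact List.mem_append.mp hx : x ∈ (v::t).dropLast ∨ x ∈ [b]) with hx' | hx'
    · have := (List.pairwise_append.mp (by rw [← hdecomp] at hpw; exact hpw)).2.2
      exact le_of_lt (this x hx' b (by simp))
    · simp at hx'; exact le_of_eq hx'

lemma path_head_le_last {v b p} (hp : IsPathFromTo E v p b) : v ≤ b :=
  (path_le_of_mem hE hp hp.last_mem).1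

end Aux
section Aux2

variable {E : Fin n → Fin n → Prop}

lemma path_cons {a v b : Fin n} {p : List (Fin n)} (h : E a v) (hp : IsPathFromTo E v p b) :
    IsPathFromTo E a (a :: p) b := by
  refine ⟨(isDiPath_iff _).mpr ⟨by simp, ?_⟩, rfl, ?_⟩
  · exact List.isChain_cons.mpr ⟨fun y hy => by rw [hp.2.1] at hy; cases hy; exact h, hp.chain'⟩
  · cases p with
    | nil => exact absurd rfl hp.ne_nil
    | cons c t => rw [List.getLast?_cons_cons]; exact hp.2.2

lemma path_snoc {a i j : Fin n} {p : List (Fin n)} (hp : IsPathFromTo E a p i) (h : E i j) :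
    IsPathFromTo E a (p ++ [j]) j := by
  refine ⟨(isDiPath_iff _).mpr ⟨by simp, ?_⟩, ?_, by simp⟩
  · refine List.isChain_append.mpr ⟨hp.chain', List.isChain_singleton j, ?_⟩
    intro x hx y hy
    rw [hp.2.2] at hx; simp at hy hx; rw [← hx, ← hy]; exact h
  · rw [List.head?_append, hp.2.1]; rfl

lemma path_tail {a v b : Fin n} {t : List (Fin n)} (hp : IsPathFromTo E a (a :: v :: t) b) :
    IsPathFromTo E v (v :: t) b := by
  refine ⟨(isDiPath_iff _).mpr ⟨by simp, hp.chain'.tail⟩, rfl, ?_⟩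
  rw [← List.getLast?_cons_cons (a := a)]; exact hp.2.2

lemma path_head_cases {v b : Fin n} {p : List (Fin n)} (hp : IsPathFromTo E v p b) :
    ∃ t, p = v :: t := by
  cases p with
  | nil => exact absurd rfl hp.ne_nil
  | cons c t =>
    have hc : c = v := by simpa using hp.2.1
    exact ⟨t, by rw [hc]⟩

/-- Any path ending at `b` has the form `r ++ [b]`. -/
lemma path_last_cases {v b : Fin n} {p : List (Fin n)} (hp : IsPathFromTo E v p b) :
    ∃ r, p = r ++ [b] := by
  have hne := hp.ne_nil
  have hdecomp := List.dropLast_append_getLast hne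
  have hb : p.getLast hne = b := by
    have := hp.2.2; rwa [List.getLast?_eq_getLast hne, Option.some_inj] at this
  exact ⟨p.dropLast, by rw [← hb]; exact hdecomp.symm⟩

/-- A prefix of a path ending at any of its vertices. -/
lemma path_pref {s t w : Fin n} {p : List (Fin n)} (hp : IsPathFromTo E s p t) (hw : w ∈ p) :
    ∃ r, IsPathFromTo E s r w ∧ r <+: p := by
  induction p generalizing s with
  | nil => exact absurd rfl hp.ne_nil
  | cons a tp ih =>
    have ha : a = s := by simpa using hp.2.1
    subst ha
    rcases List.mem_cons.mp hw with rfl | hw'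
    · exact ⟨[w], isPathFromTo_single w, ⟨tp, rfl⟩⟩
    · cases tp with
      | nil => simp at hw'
      | cons x tp' =>
        obtain ⟨r', hr', hpre⟩ := ih (path_tail hp) hw'
        obtain ⟨u, rfl⟩ := path_head_cases hr'
        refine ⟨a :: x :: u, path_cons ?_ hr', ?_⟩
        · have := List.isChain_cons_cons.mp hp.chain'; exact this.1
        · obtain ⟨rest, hrest⟩ := hpre
          exact ⟨rest, by simpa using hrest⟩

/-- A suffix of a path starting at any of its vertices. -/
lemma path_suff {s t w : Fin n} {p : List (Fin n)} (hp : IsPathFromTo E s p t) (hw : w ∈ p) :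
    ∃ r, IsPathFromTo E w r t ∧ r <:+ p := by
  induction p generalizing s with
  | nil => exact absurd rfl hp.ne_nil
  | cons a tp ih =>
    have ha : a = s := by simpa using hp.2.1
    subst ha
    rcases List.mem_cons.mp hw with rfl | hw'
    · exact ⟨w :: tp, hp, List.suffix_refl _⟩
    · cases tp with
      | nil => simp at hw'
      | cons x tp' =>
        obtain ⟨r, hr, hsuf⟩ := ih (path_tail hp) hw'
        exact ⟨r, hr, hsuf.trans (List.suffix_cons _ _)⟩

end Aux2
section Aux3

variable {E : Fin n → Fin n → Prop}

/-- An undirected simple path in the underlying graph, as a list. -/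
def UPath (E : Fin n → Fin n → Prop) (x : Fin n) (L : List (Fin n)) (y : Fin n) : Prop :=
  L.Chain' (underlying E).Adj ∧ L.Nodup ∧ L.head? = some x ∧ L.getLast? = some y

lemma adj_of_E (hE : ∀ i j : Fin n, E i j → i < j) {a b : Fin n} (h : E a b) :
    (underlying E).Adj a b := show a ≠ b ∧ (E a b ∨ E b a) from ⟨ne_of_lt (hE a b h), Or.inl h⟩

lemma exists_walk (G : SimpleGraph (Fin n)) :
    ∀ (l : List (Fin n)) (a b : Fin n), List.Chain G.Adj a l →
      (a :: l).getLast? = some b → ∃ w : G.Walk a b, w.support = a :: l := by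
  intro l
  induction l with
  | nil =>
    intro a b _ hb
    have : a = b := by simpa using hb
    subst this
    exact ⟨SimpleGraph.Walk.nil, rfl⟩
  | cons c l ih =>
    intro a b hc hb
    simp only [List.Chain, List.isChain_cons_cons] at hc
    obtain ⟨w, hw⟩ := ih c b hc.2 (by rw [← List.getLast?_cons_cons (a := a)]; exact hb)
    exact ⟨SimpleGraph.Walk.cons hc.1 w, by simp [hw]⟩

lemma upath_head_cases {x y : Fin n} {L : List (Fin n)} (h : UPath E x L y) :
    ∃ t, L = x :: t := by
  cases L with
  | nil => simp [UPath] at h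
  | cons c t =>
    have : c = x := by simpa using h.2.2.1
    exact ⟨t, by rw [this]⟩

lemma upath_unique (hT : (underlying E).IsTree) {x y : Fin n} {L1 L2 : List (Fin n)}
    (h1 : UPath E x L1 y) (h2 : UPath E x L2 y) : L1 = L2 := by
  obtain ⟨t1, rfl⟩ := upath_head_cases h1
  obtain ⟨t2, rfl⟩ := upath_head_cases h2
  obtain ⟨w1, hw1⟩ := exists_walk (underlying E) t1 x y h1.1 h1.2.2.2
  obtain ⟨w2, hw2⟩ := exists_walk (underlying E) t2 x y h2.1 h2.2.2.2
  have hp1 : w1.IsPath := (SimpleGraph.Walk.isPath_def w1).mpr (by rw [hw1]; exact h1.2.1)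
  have hp2 : w2.IsPath := (SimpleGraph.Walk.isPath_def w2).mpr (by rw [hw2]; exact h2.2.1)
  have := hT.IsAcyclic.path_unique ⟨w1, hp1⟩ ⟨w2, hp2⟩
  have hw : w1 = w2 := congrArg Subtype.val this
  rw [← hw1, ← hw2, hw]

/-- A directed path gives an undirected path. -/
lemma upath_of_path (hE : ∀ i j : Fin n, E i j → i < j) {v b : Fin n} {p : List (Fin n)}
    (hp : IsPathFromTo E v p b) : UPath E v p b :=
  ⟨hp.chain'.imp (fun _ _ h => adj_of_E hE h), path_nodup hE hp, hp.2.1, hp.2.2⟩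

/-- Uniqueness of directed paths in a polytree. -/
lemma dipath_unique (hE : ∀ i j : Fin n, E i j → i < j) (hT : (underlying E).IsTree)
    {a b : Fin n} {p q : List (Fin n)}
    (hp : IsPathFromTo E a p b) (hq : IsPathFromTo E a q b) : p = q :=
  upath_unique hT (upath_of_path hE hp) (upath_of_path hE hq)

/-- Gluing two directed paths with common source into an undirected path. -/
lemma upath_glue (hE : ∀ i j : Fin n, E i j → i < j) {v b c : Fin n} {p q : List (Fin n)}
    (hp : IsPathFromTo E v p b) (hq : IsPathFromTo E v q c)
    (hd : ∀ w, w ∈ p → w ∈ q → w = v) : UPath E b (p.reverse ++ q.tail) c := by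
  obtain ⟨tq, rfl⟩ := path_head_cases hq
  have hnodupq := path_nodup hE hq
  refine ⟨?_, ?_, ?_, ?_⟩
  · refine List.isChain_append.mpr ⟨?_, ?_, ?_⟩
    · rw [List.isChain_reverse]
      exact hp.chain'.imp (fun a b h => ((adj_of_E hE h).symm : (underlying E).Adj b a))
    · exact (hq.chain'.imp (fun _ _ h => adj_of_E hE h)).tail
    · intro x hx y hy
      rw [List.getLast?_reverse, hp.2.1, Option.mem_def, Option.some_inj] at hx
      subst hx
      simp only [List.tail_cons] at hy
      cases tq with
      | nil => simp at hy
      | cons d t =>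
        have : d = y := by simpa using hy
        subst this
        exact adj_of_E hE (List.isChain_cons_cons.mp hq.chain').1
  · refine List.Nodup.append (by simpa using path_nodup hE hp)
      (hnodupq.sublist (List.tail_sublist _)) ?_
    intro x hx hx'
    simp only [List.tail_cons] at hx'
    have hxv : x = v := hd x (by simpa using hx) (List.mem_cons_of_mem _ hx')
    subst hxv
    exact (List.nodup_cons.mp hnodupq).1 hx'
  · rw [List.head?_append, List.head?_reverse, hp.2.2]; rfl
  · rw [List.getLast?_append]
    simp only [List.tail_cons]
    cases tq with
    | nil =>
      have : v = c := by simpa using hq.2.2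
      subst this
      simp [List.getLast?_reverse, hp.2.1]
    | cons d t =>
      rw [← List.getLast?_cons_cons (a := v)]
      rw [hq.2.2]
      rfl

end Aux3
section Aux4

variable {E : Fin n → Fin n → Prop}
variable (hE : ∀ i j : Fin n, E i j → i < j) (hT : (underlying E).IsTree)
include hE hT

/-- Divergence of two directed paths with common source, in a polytree. -/
lemma path_div {b c : Fin n} :
    ∀ (p : List (Fin n)) {q : List (Fin n)} {a : Fin n},
      IsPathFromTo E a p b → IsPathFromTo E a q c →
      ∃ u p' q', IsPathFromTo E u p' b ∧ IsPathFromTo E u q' c ∧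
        (∀ w, w ∈ p' → w ∈ q' → w = u) ∧ p' <:+ p ∧ q' <:+ q := by
  intro p
  induction p with
  | nil => intro q a hp _; exact absurd rfl hp.ne_nil
  | cons a0 tp ih =>
    intro q a hp hq
    have ha0 : a0 = a := by simpa using hp.2.1
    subst ha0
    obtain ⟨tq, rfl⟩ := path_head_cases hq
    cases tp with
    | nil =>
      have hba : a0 = b := by simpa using hp.2.2
      subst hba
      exact ⟨a0, [a0], a0 :: tq, isPathFromTo_single a0, hq,
        fun w hw _ => by simpa using hw, List.suffix_refl _, List.suffix_refl _⟩
    | cons x tp' =>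
      cases tq with
      | nil =>
        have hca : a0 = c := by simpa using hq.2.2
        subst hca
        exact ⟨a0, a0 :: x :: tp', [a0], hp, isPathFromTo_single a0,
          fun w _ hw => by simpa using hw, List.suffix_refl _, List.suffix_refl _⟩
      | cons y tq' =>
        by_cases hxy : x = y
        · subst hxy
          obtain ⟨u, p', q', h1, h2, h3, h4, h5⟩ := ih (path_tail hp) (path_tail hq)
          exact ⟨u, p', q', h1, h2, h3, h4.trans (List.suffix_cons _ _),
            h5.trans (List.suffix_cons _ _)⟩
        · refine ⟨a0, a0 :: x :: tp', a0 :: y :: tq', hp, hq, ?_, List.suffix_refl _,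
            List.suffix_refl _⟩
          intro w hwp hwq
          by_contra hwa
          have hwp' : w ∈ x :: tp' := by
            rcases List.mem_cons.mp hwp with h | h
            · exact absurd h hwa
            · exact h
          have hwq' : w ∈ y :: tq' := by
            rcases List.mem_cons.mp hwq with h | h
            · exact absurd h hwa
            · exact h
          obtain ⟨r1, hr1, _⟩ := path_pref (path_tail hp) hwp'
          obtain ⟨r2, hr2, _⟩ := path_pref (path_tail hq) hwq'
          have hEx : E a0 x := (List.isChain_cons_cons.mp hp.chain').1
          have hEy : E a0 y := (List.isChain_cons_cons.mp hq.chain').1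
          have h1 : IsPathFromTo E a0 (a0 :: r1) w := path_cons (by
            obtain ⟨t1, rfl⟩ := path_head_cases hr1; exact hEx) hr1
          have h2 : IsPathFromTo E a0 (a0 :: r2) w := path_cons (by
            obtain ⟨t2, rfl⟩ := path_head_cases hr2; exact hEy) hr2
          have := dipath_unique hE hT h1 h2
          obtain ⟨t1, rfl⟩ := path_head_cases hr1
          obtain ⟨t2, rfl⟩ := path_head_cases hr2
          injection this with _ h'
          injection h' with h'' _
          exact hxy h''

end Aux4
section Aux5

variable {E : Fin n → Fin n → Prop}

/-- Reachability by a directed path (allowing the trivial path). -/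
def Reach (E : Fin n → Fin n → Prop) (a b : Fin n) : Prop := ∃ p, IsPathFromTo E a p b

lemma reach_refl (a : Fin n) : Reach E a a := ⟨[a], isPathFromTo_single a⟩

lemma reach_le (hE : ∀ i j : Fin n, E i j → i < j) {a b : Fin n} (h : Reach E a b) : a ≤ b := by
  obtain ⟨p, hp⟩ := h; exact path_head_le_last hE hp

lemma reach_snoc {a i j : Fin n} (h : Reach E a i) (hij : E i j) : Reach E a j := by
  obtain ⟨p, hp⟩ := h; exact ⟨p ++ [j], path_snoc hp hij⟩

open Classical in
/-- The unique directed path between two vertices (junk value if unreachable). -/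
noncomputable def thePath (E : Fin n → Fin n → Prop) (a b : Fin n) : List (Fin n) :=
  if h : Reach E a b then h.choose else []

lemma thePath_spec {a b : Fin n} (h : Reach E a b) : IsPathFromTo E a (thePath E a b) b := by
  rw [thePath, dif_pos h]; exact h.choose_spec

lemma thePath_eq (hE : ∀ i j : Fin n, E i j → i < j) (hT : (underlying E).IsTree)
    {a b : Fin n} {p : List (Fin n)} (hp : IsPathFromTo E a p b) : thePath E a b = p :=
  dipath_unique hE hT (thePath_spec ⟨p, hp⟩) hp

open Classical in
/-- Path-weight matrix: the candidate for `(1-Λ)⁻¹`. -/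
noncomputable def Nmat (E : Fin n → Fin n → Prop) (Λ : Matrix (Fin n) (Fin n) ℝ) :
    Matrix (Fin n) (Fin n) ℝ :=
  fun a b => if Reach E a b then pathProd (fun x y => Λ x y) (thePath E a b) else 0

variable {Λ : Matrix (Fin n) (Fin n) ℝ}

lemma Nmat_eq_zero {a b : Fin n} (h : ¬ Reach E a b) : Nmat E Λ a b = 0 := by
  rw [Nmat, if_neg h]

lemma reach_of_Nmat_ne_zero {a b : Fin n} (h : Nmat E Λ a b ≠ 0) : Reach E a b := by
  by_contra hr; exact h (Nmat_eq_zero hr)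

lemma Nmat_eq (hE : ∀ i j : Fin n, E i j → i < j) (hT : (underlying E).IsTree)
    {a b : Fin n} {p : List (Fin n)} (hp : IsPathFromTo E a p b) :
    Nmat E Λ a b = pathProd (fun x y => Λ x y) p := by
  rw [Nmat, if_pos ⟨p, hp⟩, thePath_eq hE hT hp]

lemma Nmat_diag (hE : ∀ i j : Fin n, E i j → i < j) (hT : (underlying E).IsTree) (a : Fin n) :
    Nmat E Λ a a = 1 := by
  rw [Nmat_eq hE hT (isPathFromTo_single a)]; rfl

lemma pathProd_snoc {R : Type*} [CommSemiring R] (w : Fin n → Fin n → R) {x c : Fin n} :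
    ∀ (p : List (Fin n)), p.getLast? = some x →
      pathProd w (p ++ [c]) = pathProd w p * w x c := by
  intro p
  induction p with
  | nil => intro h; simp at h
  | cons a t ih =>
    intro h
    cases t with
    | nil =>
      have : a = x := by simpa using h
      subst this
      simp [pathProd]
    | cons b l =>
      have h' : (b :: l).getLast? = some x := by rwa [List.getLast?_cons_cons] at h
      calc pathProd w (a :: b :: l ++ [c]) = w a b * pathProd w ((b :: l) ++ [c]) := rfl
        _ = w a b * (pathProd w (b :: l) * w x c) := by rw [ih h']
        _ = pathProd w (a :: b :: l) * w x c := by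
              show _ = w a b * pathProd w (b :: l) * w x c
              ring

/-- The recursion satisfied by `Nmat`. -/
lemma Nmat_recur (hE : ∀ i j : Fin n, E i j → i < j) (hT : (underlying E).IsTree)
    (hsupp : Supported E Λ) (a b : Fin n) :
    Nmat E Λ a b = (if a = b then (1:ℝ) else 0) + ∑ x, Nmat E Λ a x * Λ x b := by
  by_cases hab : a = b
  · subst hab
    rw [if_pos rfl, Nmat_diag hE hT]
    have hsum : ∑ x, Nmat E Λ a x * Λ x a = 0 := by
      refine Finset.sum_eq_zero fun x _ => ?_
      by_contra h
      have h1 : Nmat E Λ a x ≠ 0 := fun hz => h (by rw [hz]; ring)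
      have h2 : Λ x a ≠ 0 := fun hz => h (by rw [hz]; ring)
      have hr := reach_le hE (reach_of_Nmat_ne_zero h1)
      have hxa : E x a := by by_contra hc; exact h2 (hsupp x a hc)
      exact absurd (hE x a hxa) (not_lt.mpr hr)
    rw [hsum]; ring
  · rw [if_neg hab]
    by_cases hr : Reach E a b
    · obtain ⟨p, hp⟩ := hr
      obtain ⟨r, rfl⟩ := path_last_cases hp
      have hrne : r ≠ [] := by
        rintro rfl
        have hba : b = a := by simpa using hp.2.1
        exact hab hba.symm
      have hrlast := List.dropLast_append_getLast hrne
      set cc := r.getLast hrne with hcc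
      have hrpath : IsPathFromTo E a r cc := by
        refine ⟨(isDiPath_iff _).mpr ⟨hrne, hp.chain'.prefix ⟨[b], rfl⟩⟩, ?_, ?_⟩
        · cases r with
          | nil => exact absurd rfl hrne
          | cons c t => simpa using hp.2.1
        · rw [List.getLast?_eq_getLast hrne]
      have hEcb : E cc b := by
        have := List.isChain_append.mp hp.chain'
        exact this.2.2 cc (by rw [List.getLast?_eq_getLast hrne]; rfl) b rfl
      have hNab : Nmat E Λ a (b : Fin n) = pathProd (fun x y => Λ x y) (r ++ [b]) :=
        Nmat_eq hE hT hp
      rw [hNab, pathProd_snoc _ r (by rw [List.getLast?_eq_getLast hrne])]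
      have hsum : ∑ x, Nmat E Λ a x * Λ x b = Nmat E Λ a cc * Λ cc b := by
        refine Finset.sum_eq_single cc (fun x _ hx => ?_) (fun h => absurd (Finset.mem_univ _) h)
        by_contra h
        have h1 : Nmat E Λ a x ≠ 0 := fun hz => h (by rw [hz]; ring)
        have h2 : Λ x b ≠ 0 := fun hz => h (by rw [hz]; ring)
        obtain ⟨q, hq⟩ := reach_of_Nmat_ne_zero h1
        have hxb : E x b := by by_contra hc; exact h2 (hsupp x b hc)
        have hq' : IsPathFromTo E a (q ++ [b]) b := path_snoc hq hxb
        have := dipath_unique hE hT hq' hp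
        have hqr : q = r := by
          have := List.append_cancel_right (this : q ++ [b] = r ++ [b])
          exact this
        subst hqr
        have hxcc : x = cc := by
          have h1 := hq.2.2
          rw [List.getLast?_eq_getLast hrne] at h1
          exact (Option.some_inj.mp h1).symm
        exact hx hxcc
      rw [hsum, Nmat_eq hE hT hrpath]
      ring
    · rw [Nmat_eq_zero hr]
      have hsum : ∑ x, Nmat E Λ a x * Λ x b = 0 := by
        refine Finset.sum_eq_zero fun x _ => ?_
        by_contra h
        have h1 : Nmat E Λ a x ≠ 0 := fun hz => h (by rw [hz]; ring)
        have h2 : Λ x b ≠ 0 := fun hz => h (by rw [hz]; ring)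
        have hxb : E x b := by by_contra hc; exact h2 (hsupp x b hc)
        exact hr (reach_snoc (reach_of_Nmat_ne_zero h1) hxb)
      rw [hsum]; ring

/-- `Nmat` is the inverse of `1 - Λ`. -/
lemma Nmat_inv (hE : ∀ i j : Fin n, E i j → i < j) (hT : (underlying E).IsTree)
    (hsupp : Supported E Λ) : (1 - Λ)⁻¹ = Nmat E Λ := by
  refine Matrix.inv_eq_left_inv ?_
  ext a b
  rw [Matrix.mul_apply]
  have : ∀ x, Nmat E Λ a x * (1 - Λ) x b
      = Nmat E Λ a x * (if x = b then (1:ℝ) else 0) - Nmat E Λ a x * Λ x b := by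
    intro x
    rw [Matrix.sub_apply, Matrix.one_apply]
    ring
  rw [Finset.sum_congr rfl (fun x _ => this x), Finset.sum_sub_distrib]
  have h1 : ∑ x, Nmat E Λ a x * (if x = b then (1:ℝ) else 0) = Nmat E Λ a b := by
    rw [Finset.sum_eq_single b (fun x _ hx => by rw [if_neg hx]; ring)
      (fun h => absurd (Finset.mem_univ _) h), if_pos rfl]; ring
  rw [h1]
  have := Nmat_recur hE hT hsupp a b
  rw [Matrix.one_apply]
  by_cases hab : a = b <;> simp [hab] at this ⊢ <;> rw [this] <;> ring

end Aux5
section Aux6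

variable {E : Fin n → Fin n → Prop}
variable (hE : ∀ i j : Fin n, E i j → i < j) (hT : (underlying E).IsTree)
include hE hT

/-- The key combinatorial lemma: if `i → j` is an edge, `v` reaches `i` and `c` by paths
whose union (with the edge `i→j` appended) meets only in `v`, then any vertex `a`
reaching both `c` and `j` must reach `j` through the edge `i → j`. -/
lemma key_lemma {v i j c a : Fin n} (hij : E i j)
    {P1 Q1 : List (Fin n)} (hP1 : IsPathFromTo E v P1 i) (hQ1 : IsPathFromTo E v Q1 c)
    (hd : ∀ w, w ∈ P1 ++ [j] → w ∈ Q1 → w = v)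
    (hac : Reach E a c) (haj : Reach E a j) :
    ∃ r, IsPathFromTo E a r i ∧ IsPathFromTo E a (r ++ [j]) j := by
  have hP2 : IsPathFromTo E v (P1 ++ [j]) j := path_snoc hP1 hij
  have hUv : UPath E j ((P1 ++ [j]).reverse ++ Q1.tail) c := upath_glue hE hP2 hQ1 hd
  -- decompose P1 = s ++ [i]
  obtain ⟨s, hs⟩ := path_last_cases hP1
  have hP2rev : (P1 ++ [j]).reverse = j :: i :: s.reverse := by
    rw [hs]; simp
  obtain ⟨pa, hpa⟩ := haj
  obtain ⟨qa, hqa⟩ := hac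
  obtain ⟨u, p', q', hp', hq', hdisj, hsufp, _⟩ := path_div hE hT pa hpa hqa
  by_cases hu : u = j
  · -- the two `c`-paths pass through `j`: impossible
    exfalso
    rw [hu] at hq'
    have hUa : UPath E j q' c := upath_of_path hE hq'
    have heq := upath_unique hT hUa hUv
    rw [hP2rev] at heq
    -- q' = j :: i :: ..., so E j i, contradiction
    have : E j i := by
      have hc := hq'.chain'
      rw [heq] at hc
      exact (List.isChain_cons_cons.mp hc).1
    exact absurd (hE j i this) (not_lt.mpr (le_of_lt (hE i j hij)))
  · -- p' is a path u → j with u ≠ j; glue with q'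
    have hUa : UPath E j (p'.reverse ++ q'.tail) c := upath_glue hE hp' hq' hdisj
    have heq := upath_unique hT hUa hUv
    rw [hP2rev] at heq
    -- p' = r' ++ [j] with r' ≠ []
    obtain ⟨r', hr'⟩ := path_last_cases hp'
    have hr'ne : r' ≠ [] := by
      rintro rfl
      have hju : j = u := by simpa [hr'] using hp'.2.1
      exact hu hju.symm
    obtain ⟨s', hs'⟩ : ∃ s', r' = s' ++ [r'.getLast hr'ne] :=
      ⟨r'.dropLast, (List.dropLast_append_getLast hr'ne).symm⟩
    set z := r'.getLast hr'ne with hz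
    have hp'rev : p'.reverse = j :: z :: s'.reverse := by
      rw [hr', hs']; simp
    rw [hp'rev] at heq
    simp only [List.cons_append, List.cons.injEq] at heq
    have hzi : z = i := heq.2.1
    -- i ∈ p' ⊆ pa
    have hip : i ∈ pa := hsufp.subset (by
      rw [hr', hs', hzi]
      simp)
    -- suffix of pa from i is the path [i, j]
    obtain ⟨r2, hr2, hsuf2⟩ := path_suff hpa hip
    have hij_path : IsPathFromTo E i [i, j] j := by
      refine ⟨(isDiPath_iff _).mpr ⟨by simp, ?_⟩, rfl, rfl⟩
      exact List.isChain_cons_cons.mpr ⟨hij, List.isChain_singleton j⟩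
    have : r2 = [i, j] := dipath_unique hE hT hr2 hij_path
    subst this
    obtain ⟨t, ht⟩ := hsuf2
    refine ⟨t ++ [i], ?_, ?_⟩
    · -- t ++ [i] is a path a → i
      have hpa' : pa = (t ++ [i]) ++ [j] := by rw [← ht]; simp
      refine ⟨(isDiPath_iff _).mpr ⟨by simp, ?_⟩, ?_, by simp⟩
      · exact hpa.chain'.prefix ⟨[j], by rw [← hpa']⟩
      · have := hpa.2.1
        rw [hpa', List.head?_append, List.head?_append] at this
        rcases hth : (t ++ [i]).head? with _ | z'
        · simp [List.head?_append] at hth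
        · rw [List.head?_append] at hth
          rw [hth] at this
          simpa using this
    · have hpa' : pa = (t ++ [i]) ++ [j] := by rw [← ht]; simp
      rw [← hpa']
      exact hpa

end Aux6
section Aux7

variable {E : Fin n → Fin n → Prop} {Λ : Matrix (Fin n) (Fin n) ℝ}
variable (hE : ∀ i j : Fin n, E i j → i < j) (hT : (underlying E).IsTree)
include hE hT

/-- Entry-level consequence of the key lemma. -/
lemma Nmat_entry_rel {v i j c a : Fin n} (hij : E i j)
    {P1 Q1 : List (Fin n)} (hP1 : IsPathFromTo E v P1 i) (hQ1 : IsPathFromTo E v Q1 c)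
    (hd : ∀ w, w ∈ P1 ++ [j] → w ∈ Q1 → w = v)
    (hac : Reach E a c) :
    Nmat E Λ a j = Λ i j * Nmat E Λ a i := by
  by_cases haj : Reach E a j
  · obtain ⟨r, hri, hrj⟩ := key_lemma hE hT hij hP1 hQ1 hd hac haj
    rw [Nmat_eq hE hT hrj, Nmat_eq hE hT hri,
      pathProd_snoc _ r hri.2.2]
    ring
  · rw [Nmat_eq_zero haj]
    have : ¬ Reach E a i := fun h => haj (reach_snoc h hij)
    rw [Nmat_eq_zero this]
    ring

/-- Elements below a common point of a path lie in the prefix. -/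
lemma mem_prefix_of_le {s t w x : Fin n} {p r : List (Fin n)}
    (hp : IsPathFromTo E s p t) (hpre : r <+: p) (hr : IsPathFromTo E s r w)
    (hx : x ∈ p) (hxw : x ≤ w) : x ∈ r := by
  obtain ⟨rest, hrest⟩ := hpre
  have hpw : p.Pairwise (· < ·) := path_pairwise hE hp
  rw [← hrest] at hx hpw
  rcases List.mem_append.mp hx with h | h
  · exact h
  · exfalso
    have := (List.pairwise_append.mp hpw).2.2 w hr.last_mem x h
    exact absurd hxw (not_le.mpr this)

/-- Data extracted from `SameTop2`. -/
lemma sameTop2_extract {i j k : Fin n} (hij : E i j) (h : SameTop2 E i j k) :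
    ∃ v P1 Q1, IsPathFromTo E v P1 i ∧ IsPathFromTo E v Q1 k ∧
      (∀ w, w ∈ P1 ++ [j] → w ∈ Q1 → w = v) := by
  obtain ⟨v, ⟨p, q, ⟨⟨hpi, hqk⟩, _⟩⟩, ⟨p2, q2, ⟨⟨hpj, hqk2⟩, hsimp2⟩⟩⟩ := h
  have hq2 : q2 = q := dipath_unique hE hT hqk2 hqk
  have hp2 : p2 = p ++ [j] := dipath_unique hE hT hpj (path_snoc hpi hij)
  refine ⟨v, p, q, hpi, hqk, ?_⟩
  intro w hw hw'
  exact hsimp2 w (by rw [hp2]; exact hw) (by rw [hq2]; exact hw')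

/-- Data extracted from `SameTop3`. -/
lemma sameTop3_extract {i j l m : Fin n} (hij : E i j) (h : SameTop3 E i j l m) :
    ∃ v P1, IsPathFromTo E v P1 i ∧
      ((∃ Q, IsPathFromTo E v Q l ∧ ∀ w, w ∈ P1 ++ [j] → w ∈ Q → w = v) ∨
       (∃ R, IsPathFromTo E v R m ∧ ∀ w, w ∈ P1 ++ [j] → w ∈ R → w = v)) := by
  obtain ⟨v, ⟨p, q, r, ⟨⟨hpi, hql, hrm⟩, _⟩⟩, ⟨p2, q2, r2, ⟨⟨hpj, hql2, hrm2⟩, hsimp2⟩⟩⟩ := h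
  have hq2 : q2 = q := dipath_unique hE hT hql2 hql
  have hr2 : r2 = r := dipath_unique hE hT hrm2 hrm
  have hp2 : p2 = p ++ [j] := dipath_unique hE hT hpj (path_snoc hpi hij)
  rw [hq2, hr2, hp2] at hsimp2
  refine ⟨v, p, hpi, ?_⟩
  by_cases hQ : ∀ w, w ∈ p ++ [j] → w ∈ q → w = v
  · exact Or.inl ⟨q, hql, hQ⟩
  · push_neg at hQ
    obtain ⟨x, hxp, hxq, hxv⟩ := hQ
    refine Or.inr ⟨r, hrm, ?_⟩
    intro w hwp hwr
    by_contra hwv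
    have hP2 : IsPathFromTo E v (p ++ [j]) j := path_snoc hpi hij
    rcases le_total x w with hle | hle
    · -- x lies on the prefix of p++[j] up to w, which equals the prefix of r up to w
      obtain ⟨r1, hr1, hpre1⟩ := path_pref hP2 hwp
      obtain ⟨r1', hr1', hpre1'⟩ := path_pref hrm hwr
      have : r1 = r1' := dipath_unique hE hT hr1 hr1'
      have hxr1 : x ∈ r1 := mem_prefix_of_le hE hT hP2 hpre1 hr1 hxp hle
      have hxr : x ∈ r := hpre1'.subset (this ▸ hxr1)
      exact hxv (hsimp2 x hxp hxq hxr)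
    · -- w lies on the prefix of p++[j] up to x, which equals the prefix of q up to x
      obtain ⟨r1, hr1, hpre1⟩ := path_pref hP2 hxp
      obtain ⟨r1', hr1', hpre1'⟩ := path_pref hql hxq
      have : r1 = r1' := dipath_unique hE hT hr1 hr1'
      have hwr1 : w ∈ r1 := mem_prefix_of_le hE hT hP2 hpre1 hr1 hwp hle
      have hwq : w ∈ q := hpre1'.subset (this ▸ hwr1)
      exact hwv (hsimp2 w hwp hwq hwr)

end Aux7
section Aux8

variable {E : Fin n → Fin n → Prop} {Λ : Matrix (Fin n) (Fin n) ℝ} {ω2 ω3 : Fin n → ℝ}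

lemma momentS_apply (Λ : Matrix (Fin n) (Fin n) ℝ) (ω2 : Fin n → ℝ) (x y : Fin n) :
    momentS Λ ω2 x y = ∑ b, (1 - Λ)⁻¹ b x * ω2 b * (1 - Λ)⁻¹ b y := by
  rw [momentS, Matrix.mul_apply]
  refine Finset.sum_congr rfl fun b _ => ?_
  rw [Matrix.mul_diagonal, Matrix.transpose_apply]

lemma momentS_symm (x y : Fin n) : momentS Λ ω2 x y = momentS Λ ω2 y x := by
  rw [momentS_apply, momentS_apply]
  exact Finset.sum_congr rfl fun b _ => by ring

lemma momentS_minmax (x y : Fin n) :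
    momentS Λ ω2 (min x y) (max x y) = momentS Λ ω2 x y := by
  rcases le_total x y with h | h
  · rw [min_eq_left h, max_eq_right h]
  · rw [min_eq_right h, max_eq_left h, momentS_symm]

lemma momentT_comm12 (x y z : Fin n) : momentT Λ ω3 x y z = momentT Λ ω3 y x z := by
  rw [momentT, momentT]; exact Finset.sum_congr rfl fun a _ => by ring

lemma momentT_comm23 (x y z : Fin n) : momentT Λ ω3 x y z = momentT Λ ω3 x z y := by
  rw [momentT, momentT]; exact Finset.sum_congr rfl fun a _ => by ring

lemma momentT_comm13 (x y z : Fin n) : momentT Λ ω3 x y z = momentT Λ ω3 z y x := by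
  rw [momentT, momentT]; exact Finset.sum_congr rfl fun a _ => by ring

lemma momentT_sort (x y z : Fin n) :
    momentT Λ ω3 (min x (min y z)) (mid3 x y z) (max x (max y z)) = momentT Λ ω3 x y z := by
  simp only [mid3]
  rcases le_total x y with h1 | h1 <;> rcases le_total y z with h2 | h2
  · have h3 := h1.trans h2
    simp only [min_eq_left h1, min_eq_right h1, max_eq_right h1, max_eq_left h1, min_eq_left h2, min_eq_right h2, max_eq_right h2, max_eq_left h2, min_eq_left h3, min_eq_right h3, max_eq_right h3, max_eq_left h3]
  · rcases le_total x z with h3 | h3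
    · simp only [min_eq_left h1, min_eq_right h1, max_eq_right h1, max_eq_left h1, min_eq_left h2, min_eq_right h2, max_eq_right h2, max_eq_left h2, min_eq_left h3, min_eq_right h3, max_eq_right h3, max_eq_left h3]
      rw [momentT_comm23]
    · simp only [min_eq_left h1, min_eq_right h1, max_eq_right h1, max_eq_left h1, min_eq_left h2, min_eq_right h2, max_eq_right h2, max_eq_left h2, min_eq_left h3, min_eq_right h3, max_eq_right h3, max_eq_left h3]
      rw [momentT_comm12 z x y, ← momentT_comm23]
  · rcases le_total x z with h3 | h3
    · simp only [min_eq_left h1, min_eq_right h1, max_eq_right h1, max_eq_left h1, min_eq_left h2, min_eq_right h2, max_eq_right h2, max_eq_left h2, min_eq_left h3, min_eq_right h3, max_eq_right h3, max_eq_left h3]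
      rw [momentT_comm12]
    · simp only [min_eq_left h1, min_eq_right h1, max_eq_right h1, max_eq_left h1, min_eq_left h2, min_eq_right h2, max_eq_right h2, max_eq_left h2, min_eq_left h3, min_eq_right h3, max_eq_right h3, max_eq_left h3]
      rw [momentT_comm23 y z x, momentT_comm12]
  · have h3 := h2.trans h1
    simp only [min_eq_left h1, min_eq_right h1, max_eq_right h1, max_eq_left h1, min_eq_left h2, min_eq_right h2, max_eq_right h2, max_eq_left h2, min_eq_left h3, min_eq_right h3, max_eq_right h3, max_eq_left h3]
    rw [momentT_comm13]

variable (hE : ∀ i j : Fin n, E i j → i < j) (hT : (underlying E).IsTree)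
include hE hT

lemma momentS_rel (hsupp : Supported E Λ) {i j : Fin n} (hij : E i j) (k : Fin n)
    (h : SameTop2 E i j k) : momentS Λ ω2 j k = Λ i j * momentS Λ ω2 i k := by
  obtain ⟨v, P1, Q1, hPi, hQk, hd⟩ := sameTop2_extract hE hT hij h
  rw [momentS_apply, momentS_apply, Finset.mul_sum]
  refine Finset.sum_congr rfl fun a _ => ?_
  rw [Nmat_inv hE hT hsupp]
  by_cases hk : Nmat E Λ a k = 0
  · rw [hk]; ring
  · rw [Nmat_entry_rel hE hT hij hPi hQk hd (reach_of_Nmat_ne_zero hk)]; ring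

lemma momentT_rel (hsupp : Supported E Λ) {i j : Fin n} (hij : E i j) (l m : Fin n)
    (h : SameTop3 E i j l m) : momentT Λ ω3 j l m = Λ i j * momentT Λ ω3 i l m := by
  obtain ⟨v, P1, hPi, hbr⟩ := sameTop3_extract hE hT hij h
  rw [momentT, momentT, Finset.mul_sum]
  refine Finset.sum_congr rfl fun a _ => ?_
  rw [Nmat_inv hE hT hsupp]
  rcases hbr with ⟨Q, hQl, hd⟩ | ⟨R, hRm, hd⟩
  · by_cases hl : Nmat E Λ a l = 0
    · rw [hl]; ring
    · rw [Nmat_entry_rel hE hT hij hPi hQl hd (reach_of_Nmat_ne_zero hl)]; ring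
  · by_cases hm : Nmat E Λ a m = 0
    · rw [hm]; ring
    · rw [Nmat_entry_rel hE hT hij hPi hRm hd (reach_of_Nmat_ne_zero hm)]; ring

end Aux8

/-- For an edge `i → j` of a polytree, every `2 × 2` minor of the
trek-matrix `A_{i,j}` lies in `I^{≤3}(G)`; concretely, on the model the second row of
`A_{i,j}` equals `λ_{ij}` times the first row. -/
theorem edge_trek_matrix_rank_one (n : ℕ) (E : Fin n → Fin n → Prop) (hG : IsPolytree E)
    (i j : Fin n) (hij : E i j) :
    (∀ f : MvPolynomial (MomVar n) ℝ, IsTrekMinorOf E i j f → f ∈ momentIdeal E) ∧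
    (∀ (Λ : Matrix (Fin n) (Fin n) ℝ) (ω2 ω3 : Fin n → ℝ), Supported E Λ →
      (∀ k, SameTop2 E i j k → momentS Λ ω2 j k = Λ i j * momentS Λ ω2 i k) ∧
      (∀ l m, SameTop3 E i j l m → momentT Λ ω3 j l m = Λ i j * momentT Λ ω3 i l m)) := by
  obtain ⟨hE, hT⟩ := hG
  have main : ∀ (Λ : Matrix (Fin n) (Fin n) ℝ) (ω2 ω3 : Fin n → ℝ), Supported E Λ →
      (∀ k, SameTop2 E i j k → momentS Λ ω2 j k = Λ i j * momentS Λ ω2 i k) ∧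
      (∀ l m, SameTop3 E i j l m → momentT Λ ω3 j l m = Λ i j * momentT Λ ω3 i l m) := by
    intro Λ ω2 ω3 hsupp
    exact ⟨fun k hk => momentS_rel hE hT hsupp hij k hk,
           fun l m hlm => momentT_rel hE hT hsupp hij l m hlm⟩
  refine ⟨?_, main⟩
  intro f hf
  show ∀ (S : Matrix (Fin n) (Fin n) ℝ) (T : Fin n → Fin n → Fin n → ℝ),
    MomentModel E S T → eval (evalVar S T) f = 0
  intro S T hST
  obtain ⟨Λ, ω2, ω3, hsupp, _, rfl, rfl⟩ := hST
  obtain ⟨hS2, hT3⟩ := main Λ ω2 ω3 hsupp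
  have evS : ∀ x y : Fin n,
      eval (evalVar (momentS Λ ω2) (momentT Λ ω3)) (svar x y) = momentS Λ ω2 x y := by
    intro x y
    rw [svar, eval_X]
    exact momentS_minmax x y
  have evT : ∀ x y z : Fin n,
      eval (evalVar (momentS Λ ω2) (momentT Λ ω3)) (tvar x y z) = momentT Λ ω3 x y z := by
    intro x y z
    rw [tvar, eval_X]
    exact momentT_sort x y z
  rcases hf with ⟨k, k', h1, h2, rfl⟩ | ⟨k, l, m, h1, h2, rfl⟩ | ⟨l, m, l', m', h1, h2, rfl⟩
  · rw [map_sub, _root_.map_mul, _root_.map_mul, evS, evS, evS, evS, hS2 k h1, hS2 k' h2]; ring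
  · rw [map_sub, _root_.map_mul, _root_.map_mul, evS, evS, evT, evT, hS2 k h1, hT3 l m h2]; ring
  · rw [map_sub, _root_.map_mul, _root_.map_mul, evT, evT, evT, evT, hT3 l m h1, hT3 l' m' h2]; ring

end LNG
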